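/- arXiv:1511.05071 — 5 statements merged into one kernel-verified Lean document; each statement's English description precedes it below -/
import Mathlib

section
/- Let V and W be finite-dimensional vector spaces over a field K, let B : V → W be a linear map of rank r, and define ad^r B : W → Hom(Λ^r V, Λ^{r+1} W) by (ad^r B)(ω)(η₁ ∧ … ∧ η_r) = ω ∧ Bη₁ ∧ … ∧ Bη_r. Then the image of B equals the kernel of ad^r B. -/
open ExteriorAlgebra

/-- A linearly independent family has nonzero wedge. -/
theorem iMulti_ne_zero {K W : Type*} [Field K] [AddCommGroup W] [Module K W]
    {n : ℕ} {v : Fin n → W} (hv : LinearIndependent K v) :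
    ιMulti K n v ≠ 0 := by
  classical
  set U : Submodule K W := Submodule.span K (Set.range v)
  let b : Module.Basis (Fin n) K U := Module.Basis.span hv
  obtain ⟨U', hU'⟩ := Submodule.exists_isCompl U
  let π : W →ₗ[K] U := Submodule.linearProjOfIsCompl U U' hU'
  let f : W [⋀^Fin n]→ₗ[K] K := (b.det).compLinearMap π
  have hfv : f v = 1 := by
    have hπv : (fun i => π (v i)) = b := by
      funext i
      have : v i = (b i : W) := (congrArg Subtype.val (Module.Basis.span_apply hv i)).symm
      rw [this]
      exact Submodule.linearProjOfIsCompl_apply_left hU' (b i)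
    show b.det (fun i => π (v i)) = 1
    rw [hπv, Module.Basis.det_self]
  intro h0
  have := liftAlternating_apply_ιMulti
    (R := K) (M := W) (N := K) (Function.update (fun _ => 0) n f) v
  rw [h0, map_zero, Function.update_self, hfv] at this
  exact one_ne_zero this.symm

/-- A family of more than `finrank U` vectors inside `U` has zero wedge. -/
theorem iMulti_eq_zero_of_mem {K W : Type*} [Field K] [AddCommGroup W] [Module K W]
    {n : ℕ} {U : Submodule K W} [FiniteDimensional K U] (hn : Module.finrank K U < n)
    {v : Fin n → W} (hv : ∀ i, v i ∈ U) :
    ιMulti K n v = 0 := by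
  apply AlternatingMap.map_linearDependent
  intro hli
  have hli' : LinearIndependent K (fun i => (⟨v i, hv i⟩ : U)) := by
    exact LinearIndependent.of_comp U.subtype (by
      convert hli using 1 <;> rfl)
  have := hli'.fintype_card_le_finrank
  simp only [Fintype.card_fin] at this
  omega



/-- Let `V`, `W` be finite-dimensional vector spaces over a field `K`,
`B : V → W` a linear map of rank `r`.  The map `ad^r B : W → Hom(Λ^r V, Λ^{r+1} W)` is
given by `(ad^r B)(ω)(η₁ ∧ … ∧ η_r) = ω ∧ Bη₁ ∧ … ∧ Bη_r` (wedge computed in the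
exterior algebra of `W`).  Then `Im B = Ker (ad^r B)`: since the decomposable elements
`η₁ ∧ … ∧ η_r` span `Λ^r V`, the kernel of `ad^r B` is exactly the set of `ω ∈ W` whose
wedge with every `Bη₁ ∧ … ∧ Bη_r` vanishes. -/
theorem statement0 {K V W : Type*} [Field K]
    [AddCommGroup V] [Module K V] [FiniteDimensional K V]
    [AddCommGroup W] [Module K W] [FiniteDimensional K W]
    (B : V →ₗ[K] W) (r : ℕ) (hr : r = Module.finrank K (LinearMap.range B)) :
    (LinearMap.range B : Set W) =
      {ω : W | ∀ η : Fin r → V,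
        ExteriorAlgebra.ι K ω *
          (List.ofFn fun i => ExteriorAlgebra.ι K (B (η i))).prod = 0} := by
  classical
  set U : Submodule K W := LinearMap.range B with hU
  have key : ∀ (ω : W) (g : Fin r → V),
      ExteriorAlgebra.ι K ω * (List.ofFn fun i => ExteriorAlgebra.ι K (B (g i))).prod
        = ιMulti K (r + 1) (Fin.cons ω fun i => B (g i)) := by
    intro ω g
    rw [ιMulti_succ_apply, ιMulti_apply, Fin.cons_zero]
    congr 1
  ext ω
  simp only [Set.mem_setOf_eq, SetLike.mem_coe]
  constructor
  · rintro ⟨x, rfl⟩ η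
    rw [key]
    apply iMulti_eq_zero_of_mem (U := U)
    · omega
    · intro i
      refine Fin.cases ?_ ?_ i
      · exact ⟨x, rfl⟩
      · intro j
        simp only [Fin.cons_succ]
        exact ⟨η j, rfl⟩
  · intro h
    by_contra hω
    let b : Module.Basis (Fin r) K U := (Module.finBasis K U).reindex (finCongr hr.symm)
    have hmem : ∀ i, (b i : W) ∈ U := fun i => (b i).2
    choose η hη using fun i => hmem i
    have hwedge := h η
    rw [key] at hwedge
    have hbv : (fun i => B (η i)) = fun i => (b i : W) := funext fun i => hη i
    have hspan : Submodule.span K (Set.range fun i => (b i : W)) = U := by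
      have : (fun i => (b i : W)) = U.subtype ∘ b := rfl
      rw [this, Set.range_comp, Submodule.span_image, b.span_eq, Submodule.map_subtype_top]
    have hli : LinearIndependent K (Fin.cons ω fun i => B (η i)) := by
      rw [hbv]
      rw [linearIndependent_fin_cons]
      refine ⟨b.linearIndependent.map' U.subtype U.ker_subtype, ?_⟩
      rw [hspan]
      exact hω
    exact iMulti_ne_zero hli hwedge
end

section
/- Let V, V', W be finite-dimensional vector spaces over a field K, let B : V → W have rank r, and let A : V' → W be linear. Then for ξ ∈ V' there exists η ∈ V with Aξ + Bη = 0 if and only if ξ ∈ Ker((ad^r B) ∘ A), where ad^r B(ω)(η₁∧…∧η_r) = ω ∧ Bη₁ ∧ … ∧ Bη_r. -/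
open ExteriorAlgebra

/-- A wedge of linearly independent vectors is nonzero. -/
lemma ιMulti_ne_zero_of_linearIndependent {K W : Type*} [Field K] [AddCommGroup W]
    [Module K W] {n : ℕ} {v : Fin n → W} (hv : LinearIndependent K v) :
    ExteriorAlgebra.ιMulti K n v ≠ 0 := by
  classical
  -- extend the range of `v` to a basis
  have hs : LinearIndepOn K id (Set.range v) := hv.linearIndepOn_id
  let b : Module.Basis _ K W := Module.Basis.extend hs
  let g : Fin n → hs.extend (Set.subset_univ _) := fun i =>
    ⟨v i, hs.subset_extend (Set.subset_univ _) ⟨i, rfl⟩⟩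
  have hbg : ∀ i, b (g i) = v i := fun i => Module.Basis.extend_apply_self hs _
  have hginj : Function.Injective g := by
    intro i j hij
    exact hv.injective (congrArg Subtype.val hij)
  -- coordinate linear map
  let L : W →ₗ[K] (Fin n → K) := LinearMap.pi fun i => b.coord (g i)
  let F : W [⋀^Fin n]→ₗ[K] K := Matrix.detRowAlternating.compLinearMap L
  have hFv : F v = 1 := by
    have e1 : F v = Matrix.det (Matrix.of fun i => L (v i)) := rfl
    have : (Matrix.of fun i => L (v i)) = (1 : Matrix (Fin n) (Fin n) K) := by
      funext i j
      simp only [Matrix.of_apply, L, LinearMap.pi_apply, ← hbg i, Module.Basis.coord_apply, Module.Basis.repr_self]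
      by_cases h : i = j
      · subst h; simp
      · rw [Finsupp.single_apply, if_neg (fun hgij => h (hginj hgij)), Matrix.one_apply_ne h]
    rw [e1, this, Matrix.det_one]
  -- lift to the exterior algebra
  let f : ∀ m, W [⋀^Fin m]→ₗ[K] K := fun m => if h : m = n then h ▸ F else 0
  intro h0
  have := ExteriorAlgebra.liftAlternating_apply_ιMulti f v
  rw [h0, map_zero] at this
  have hfn : f n = F := by simp [f]
  rw [hfn, hFv] at this
  exact one_ne_zero this.symm



/-- Let `V, V', W` be finite-dimensional vector spaces over a field `K`,
`B : V → W` of rank `r`, and `A : V' → W` linear.  Then for `ξ ∈ V'` there exists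
`η ∈ V` with `Aξ + Bη = 0` if and only if `ξ ∈ Ker ((ad^r B) ∘ A)`, where
`(ad^r B)(ω)(η₁ ∧ … ∧ η_r) = ω ∧ Bη₁ ∧ … ∧ Bη_r`; membership in the kernel is
expressed by the vanishing of all the wedges `Aξ ∧ Bη₁ ∧ … ∧ Bη_r` (the decomposables
`η₁ ∧ … ∧ η_r` span `Λ^r V`). -/
theorem statement1 {K V V' W : Type*} [Field K]
    [AddCommGroup V] [Module K V] [FiniteDimensional K V]
    [AddCommGroup V'] [Module K V'] [FiniteDimensional K V']
    [AddCommGroup W] [Module K W] [FiniteDimensional K W]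
    (B : V →ₗ[K] W) (A : V' →ₗ[K] W) (r : ℕ)
    (hr : r = Module.finrank K (LinearMap.range B)) :
    ∀ ξ : V', (∃ η : V, A ξ + B η = 0) ↔
      ∀ η : Fin r → V,
        ExteriorAlgebra.ι K (A ξ) *
          (List.ofFn fun i => ExteriorAlgebra.ι K (B (η i))).prod = 0 := by
  classical
  intro ξ
  have hmem : (∃ η : V, A ξ + B η = 0) ↔ A ξ ∈ LinearMap.range B := by
    constructor
    · rintro ⟨η, h⟩
      exact ⟨-η, by rw [map_neg, neg_eq_iff_add_eq_zero, add_comm]; exact h⟩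
    · rintro ⟨η, hη⟩
      exact ⟨-η, by rw [map_neg, hη, add_neg_cancel]⟩
  have key : ∀ η : Fin r → V,
      ExteriorAlgebra.ι K (A ξ) *
          (List.ofFn fun i => ExteriorAlgebra.ι K (B (η i))).prod
        = ExteriorAlgebra.ιMulti K (r + 1)
            (Fin.cons (A ξ) fun i => B (η i)) := by
    intro η
    rw [ExteriorAlgebra.ιMulti_apply, List.ofFn_succ, List.prod_cons]
    simp [Fin.cons_succ]
  rw [hmem]
  constructor
  · intro hmemB η
    rw [key η]
    apply AlternatingMap.map_linearDependent
    intro hli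
    have hv' : ∀ i, (Fin.cons (A ξ) fun i => B (η i) : Fin (r+1) → W) i ∈
        LinearMap.range B := by
      refine Fin.cases ?_ ?_
      · simpa using hmemB
      · intro i; simp
    let u : Fin (r + 1) → LinearMap.range B := fun i => ⟨_, hv' i⟩
    have hu : LinearIndependent K u :=
      hli.of_comp (LinearMap.range B).subtype
    have hcard := hu.fintype_card_le_finrank
    rw [Fintype.card_fin, ← hr] at hcard
    omega
  · intro hker
    by_contra hAB
    let b : Module.Basis (Fin r) K (LinearMap.range B) :=
      (Module.finBasis K (LinearMap.range B)).reindex (finCongr hr.symm)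
    have hex : ∀ i, ∃ x, B x = (b i : W) := fun i => (b i).2
    choose η hη using hex
    have hb : LinearIndependent K (fun i => (b i : W)) :=
      b.linearIndependent.map' (LinearMap.range B).subtype
        (Submodule.ker_subtype _)
    have hspan : Submodule.span K (Set.range fun i => (b i : W)) =
        LinearMap.range B := by
      have : (fun i => (b i : W)) = (LinearMap.range B).subtype ∘ b := rfl
      rw [this, Set.range_comp, Submodule.span_image, b.span_eq,
        Submodule.map_top, Submodule.range_subtype]
    have hli : LinearIndependent K (Fin.cons (A ξ) fun i => B (η i) :
        Fin (r+1) → W) := by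
      rw [linearIndependent_fin_cons]
      constructor
      · simpa [hη] using hb
      · simp only [hη]
        rw [hspan]
        exact hAB
    have := ιMulti_ne_zero_of_linearIndependent hli
    rw [← key η] at this
    exact this (hker η)
end

section
/- Let I be an ideal in k[[y]] with diagram N = N(I), and let k[[y]]^N = { F ∈ k[[y]] : supp F ⊆ ℕ^n \ N }. Then k[[y]] = I ⊕ k[[y]]^N as k-vector spaces. -/
open MvPowerSeries

/-- Total-degree-then-lexicographic comparison on multi-indices. -/
def degLexLt {n : ℕ} (a b : Fin n →₀ ℕ) : Prop :=
  toLex ((∑ i, a i : ℕ), toLex a) < toLex ((∑ i, b i : ℕ), toLex b)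

/-- `d` is the initial exponent `exp F` of the power series `F`: the minimum of the
support of `F` in the total-degree-then-lexicographic order. -/
def IsExpOf {K : Type*} [Field K] {n : ℕ}
    (F : MvPowerSeries (Fin n) K) (d : Fin n →₀ ℕ) : Prop :=
  coeff d F ≠ 0 ∧ ∀ e : Fin n →₀ ℕ, coeff e F ≠ 0 → ¬ degLexLt e d

/-- The diagram of initial exponents `N(I) = { exp F : F ∈ I \ {0} }`. -/
def diagramOf {K : Type*} [Field K] {n : ℕ}
    (I : Ideal (MvPowerSeries (Fin n) K)) : Set (Fin n →₀ ℕ) :=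
  {d | ∃ F ∈ I, F ≠ 0 ∧ IsExpOf F d}

/-- The translated cone `a + ℕ^n`. -/
def cone {n : ℕ} (a : Fin n →₀ ℕ) : Set (Fin n →₀ ℕ) :=
  {x | ∃ c : Fin n →₀ ℕ, x = a + c}

namespace S9
variable {n : ℕ}


abbrev deg (a : Fin n →₀ ℕ) : ℕ := ∑ i, a i

lemma degLexLt_iff {a b : Fin n →₀ ℕ} :
    degLexLt a b ↔ deg a < deg b ∨ (deg a = deg b ∧ toLex a < toLex b) :=
  Prod.Lex.lt_iff

lemma lex_add_lt {a b : Fin n →₀ ℕ} (c : Fin n →₀ ℕ) (h : toLex a < toLex b) :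
    toLex (c + a) < toLex (c + b) := by
  exact add_lt_add_right h (toLex c)

lemma deg_add (a b : Fin n →₀ ℕ) : deg (a + b) = deg a + deg b := by
  simp [deg, Finsupp.add_apply, Finset.sum_add_distrib]

lemma dLt_trans {a b c : Fin n →₀ ℕ} (h1 : degLexLt a b) (h2 : degLexLt b c) :
    degLexLt a c := lt_trans h1 h2

lemma dLt_irrefl (a : Fin n →₀ ℕ) : ¬ degLexLt a a := lt_irrefl _

lemma dLt_trichotomy (a b : Fin n →₀ ℕ) : degLexLt a b ∨ a = b ∨ degLexLt b a := by
  rcases lt_trichotomy (toLex ((∑ i, a i : ℕ), toLex a)) (toLex ((∑ i, b i : ℕ), toLex b)) with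
    h | h | h
  · exact Or.inl h
  · refine Or.inr (Or.inl ?_)
    have := congrArg (fun x => (ofLex x).2) h
    simpa using congrArg ofLex (by simpa using this : toLex a = toLex b)
  · exact Or.inr (Or.inr h)

lemma dLt_asymm {a b : Fin n →₀ ℕ} (h : degLexLt a b) : ¬ degLexLt b a :=
  fun h' => dLt_irrefl a (dLt_trans h h')

/-- weak version: `a ⪯ b`. -/
def dLe (a b : Fin n →₀ ℕ) : Prop := a = b ∨ degLexLt a b

lemma dLe_of_not_lt {a b : Fin n →₀ ℕ} (h : ¬ degLexLt b a) : dLe a b := by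
  rcases dLt_trichotomy a b with h1 | h1 | h1
  · exact Or.inr h1
  · exact Or.inl h1
  · exact absurd h1 h

lemma not_lt_of_dLe {a b : Fin n →₀ ℕ} (h : dLe a b) : ¬ degLexLt b a := by
  rcases h with rfl | h
  · exact dLt_irrefl a
  · exact dLt_asymm h

lemma dLe_trans {a b c : Fin n →₀ ℕ} (h1 : dLe a b) (h2 : dLe b c) : dLe a c := by
  rcases h1 with rfl | h1
  · exact h2
  rcases h2 with rfl | h2
  · exact Or.inr h1
  · exact Or.inr (dLt_trans h1 h2)

lemma dLt_of_dLe_of_dLt {a b c : Fin n →₀ ℕ} (h1 : dLe a b) (h2 : degLexLt b c) :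
    degLexLt a c := by
  rcases h1 with rfl | h1
  · exact h2
  · exact dLt_trans h1 h2

lemma dLt_add_left {a b : Fin n →₀ ℕ} (c : Fin n →₀ ℕ) (h : degLexLt a b) :
    degLexLt (c + a) (c + b) := by
  rw [degLexLt_iff] at h ⊢
  rw [deg_add, deg_add]
  rcases h with h | ⟨h1, h2⟩
  · exact Or.inl (by omega)
  · exact Or.inr ⟨by omega, lex_add_lt c h2⟩

lemma dLe_add_left {a b : Fin n →₀ ℕ} (c : Fin n →₀ ℕ) (h : dLe a b) :
    dLe (c + a) (c + b) := by
  rcases h with rfl | h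
  · exact Or.inl rfl
  · exact Or.inr (dLt_add_left c h)

lemma deg_le_of_dLe {a b : Fin n →₀ ℕ} (h : dLe a b) : deg a ≤ deg b := by
  rcases h with rfl | h
  · exact le_refl _
  · rcases degLexLt_iff.1 h with h | ⟨h, _⟩ <;> omega

lemma le_imp_dLe {a b : Fin n →₀ ℕ} (h : a ≤ b) : dLe a b := by
  have : a + (b - a) = b := add_tsub_cancel_of_le h
  have h2 : dLe (a + 0) (a + (b - a)) := by
    rcases eq_or_ne (b - a) 0 with h3 | h3
    · rw [h3]; exact Or.inl rfl
    · refine Or.inr (dLt_add_left a ?_)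
      rw [degLexLt_iff]
      left
      simp only [deg]
      have : ∑ i, (0 : Fin n →₀ ℕ) i = 0 := by simp
      rw [this]
      by_contra hc
      push_neg at hc
      have : ∀ i, (b - a) i = 0 := by
        intro i
        have := Finset.sum_eq_zero_iff.1 (Nat.le_zero.1 hc) i (Finset.mem_univ i)
        exact this
      exact h3 (Finsupp.ext this)
  rw [add_zero, this] at h2
  exact h2

lemma apply_le_deg (a : Fin n →₀ ℕ) (i : Fin n) : a i ≤ deg a :=
  Finset.single_le_sum (fun j _ => Nat.zero_le (a j)) (Finset.mem_univ i)

lemma finite_dLe (a : Fin n →₀ ℕ) : {b : Fin n →₀ ℕ | dLe b a}.Finite := by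
  have hsub : {b : Fin n →₀ ℕ | dLe b a} ⊆
      Set.Iic (Finsupp.equivFunOnFinite.symm (fun _ => deg a)) := by
    intro b hb
    intro i
    calc b i ≤ deg b := apply_le_deg b i
    _ ≤ deg a := deg_le_of_dLe hb
    _ = (Finsupp.equivFunOnFinite.symm (fun _ => deg a)) i := by
        simp [Finsupp.equivFunOnFinite]; rfl
  exact (Set.finite_Iic _).subset hsub

lemma finite_dLt (a : Fin n →₀ ℕ) : {b : Fin n →₀ ℕ | degLexLt b a}.Finite :=
  (finite_dLe a).subset (fun b hb => Or.inr hb)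

/-- The rank of `a` in the degLex well-order (which has order type `≤ ω`). -/
noncomputable def rank (a : Fin n →₀ ℕ) : ℕ := Set.ncard {b : Fin n →₀ ℕ | degLexLt b a}

lemma rank_lt_rank {a b : Fin n →₀ ℕ} (h : degLexLt a b) : rank a < rank b := by
  apply Set.ncard_lt_ncard _ (finite_dLt b)
  constructor
  · exact fun c hc => dLt_trans hc h
  · intro hsub
    exact dLt_irrefl a (hsub h)

lemma rank_le_rank {a b : Fin n →₀ ℕ} (h : dLe a b) : rank a ≤ rank b := by
  rcases h with rfl | h
  · exact le_refl _
  · exact le_of_lt (rank_lt_rank h)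

lemma rank_injective {a b : Fin n →₀ ℕ} (h : rank a = rank b) : a = b := by
  rcases dLt_trichotomy a b with h1 | h1 | h1
  · exact absurd h (ne_of_lt (rank_lt_rank h1))
  · exact h1
  · exact absurd h.symm (ne_of_lt (rank_lt_rank h1))

lemma dLe_of_rank_le {a b : Fin n →₀ ℕ} (h : rank a ≤ rank b) : dLe a b := by
  rcases dLt_trichotomy a b with h1 | h1 | h1
  · exact Or.inr h1
  · exact Or.inl h1
  · exact absurd h (not_le_of_gt (rank_lt_rank h1))

/-- Every nonempty set of exponents has a degLex-least element. -/
lemma exists_dMin {S : Set (Fin n →₀ ℕ)} (hS : S.Nonempty) :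
    ∃ a ∈ S, ∀ b ∈ S, dLe a b := by
  obtain ⟨a0, ha0⟩ := hS
  have hfin : ({b | dLe b a0} ∩ S).Finite := (finite_dLe a0).inter_of_left S
  have hne : ({b | dLe b a0} ∩ S).Nonempty := ⟨a0, Or.inl rfl, ha0⟩
  obtain ⟨a, ha, hmin⟩ := Set.exists_min_image _ rank hfin hne
  refine ⟨a, ha.2, fun b hb => ?_⟩
  by_cases hb0 : dLe b a0
  · exact dLe_of_rank_le (hmin b ⟨hb0, hb⟩)
  · have h1 : dLe a a0 := ha.1
    have h2 : degLexLt a0 b := by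
      rcases dLt_trichotomy b a0 with h | h | h
      · exact absurd (Or.inr h) hb0
      · exact absurd (Or.inl h) hb0
      · exact h
    exact dLe_trans h1 (Or.inr h2)

variable {K : Type*} [Field K]

lemma isExpOf_iff {F : MvPowerSeries (Fin n) K} {d : Fin n →₀ ℕ} :
    IsExpOf F d ↔ coeff d F ≠ 0 ∧ ∀ e, coeff e F ≠ 0 → dLe d e := by
  constructor
  · rintro ⟨h1, h2⟩
    exact ⟨h1, fun e he => dLe_of_not_lt (h2 e he)⟩
  · rintro ⟨h1, h2⟩
    exact ⟨h1, fun e he => not_lt_of_dLe (h2 e he)⟩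

lemma exists_isExp {F : MvPowerSeries (Fin n) K} (hF : F ≠ 0) : ∃ d, IsExpOf F d := by
  have hne : {d : Fin n →₀ ℕ | coeff d F ≠ 0}.Nonempty := by
    rcases Set.eq_empty_or_nonempty {d : Fin n →₀ ℕ | coeff d F ≠ 0} with h | h
    · exfalso
      refine hF (MvPowerSeries.ext fun d => ?_)
      have := Set.eq_empty_iff_forall_notMem.mp h d
      simp only [Set.mem_setOf_eq, not_not] at this
      simpa using this
    · exact h
  obtain ⟨d, hd, hmin⟩ := exists_dMin hne
  exact ⟨d, isExpOf_iff.2 ⟨hd, hmin⟩⟩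

/-- The diagram of an ideal is stable under componentwise ≤ (it is a monoid ideal). -/
lemma diagram_upward {I : Ideal (MvPowerSeries (Fin n) K)} {d e : Fin n →₀ ℕ}
    (hd : d ∈ diagramOf I) (hde : d ≤ e) : e ∈ diagramOf I := by
  obtain ⟨F, hFI, hF0, hFe⟩ := hd
  rw [isExpOf_iff] at hFe
  set t := e - d with ht
  have hte : t + d = e := tsub_add_cancel_of_le hde
  refine ⟨monomial t 1 * F, I.mul_mem_left _ hFI, ?_, isExpOf_iff.2 ⟨?_, ?_⟩⟩
  case refine_2 =>
    rw [MvPowerSeries.coeff_monomial_mul]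
    have hle : t ≤ e := le_of_add_le_left (le_of_eq hte)
    rw [if_pos hle, one_mul]
    have : e - t = d := by
      rw [ht]
      exact tsub_tsub_cancel_of_le hde
    rw [this]
    exact hFe.1
  case refine_1 =>
    intro h0
    have := congrArg (coeff e) h0
    rw [MvPowerSeries.coeff_monomial_mul] at this
    have hle : t ≤ e := le_of_add_le_left (le_of_eq hte)
    rw [if_pos hle, one_mul] at this
    have heq : e - t = d := by rw [ht]; exact tsub_tsub_cancel_of_le hde
    rw [heq] at this
    simp at this
    exact hFe.1 this
  case refine_3 =>
    intro x hx
    rw [MvPowerSeries.coeff_monomial_mul] at hx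
    by_cases hle : t ≤ x
    · rw [if_pos hle, one_mul] at hx
      have h1 : dLe d (x - t) := hFe.2 _ hx
      have h2 : dLe (t + d) (t + (x - t)) := dLe_add_left t h1
      rwa [hte, add_tsub_cancel_of_le hle] at h2
    · rw [if_neg hle] at hx
      exact absurd rfl hx

/-- Dickson's lemma: every set of exponents is covered by finitely many cones. -/
lemma dickson (N : Set (Fin n →₀ ℕ)) :
    ∃ B : Finset (Fin n →₀ ℕ), ↑B ⊆ N ∧ ∀ e ∈ N, ∃ d ∈ B, d ≤ e := by
  classical
  set M : Set (Fin n →₀ ℕ) := {d ∈ N | ∀ e ∈ N, e ≤ d → e = d} with hM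
  have hMfin : M.Finite := by
    by_contra hinf
    have hinf : M.Infinite := hinf
    let f := hinf.natEmbedding
    obtain ⟨m, m', hmm', hle⟩ := wellQuasiOrdered_le (fun k => (f k : Fin n →₀ ℕ))
    have heq : (f m : Fin n →₀ ℕ) = (f m' : Fin n →₀ ℕ) :=
      (f m').2.2 _ (f m).2.1 hle
    exact hmm'.ne (f.injective (Subtype.coe_injective heq))
  have hcover : ∀ D : ℕ, ∀ e ∈ N, deg e = D → ∃ d ∈ M, d ≤ e := by
    intro D
    induction D using Nat.strong_induction_on with
    | _ D ih =>
      intro e he hdeg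
      by_cases hmin : ∀ e' ∈ N, e' ≤ e → e' = e
      · exact ⟨e, ⟨he, hmin⟩, le_refl e⟩
      · push_neg at hmin
        obtain ⟨e', he'N, he'le, he'ne⟩ := hmin
        have hdeglt : deg e' < deg e := by
          have hle : ∀ i, e' i ≤ e i := fun i => he'le i
          have : deg e' ≤ deg e := Finset.sum_le_sum fun i _ => hle i
          rcases lt_or_eq_of_le this with h | h
          · exact h
          · exfalso
            apply he'ne
            apply Finsupp.ext
            intro i
            by_contra hne
            have hlt : e' i < e i := lt_of_le_of_ne (hle i) hne
            have : deg e' < deg e := Finset.sum_lt_sum (fun j _ => hle j)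
              ⟨i, Finset.mem_univ i, hlt⟩
            omega
        obtain ⟨d, hdM, hdle⟩ := ih (deg e') (hdeg ▸ hdeglt) e' he'N rfl
        exact ⟨d, hdM, le_trans hdle he'le⟩

  exact ⟨hMfin.toFinset, by simpa [hM] using fun d hd => hd.1,
    fun e he => by
      obtain ⟨d, hdM, hdle⟩ := hcover (deg e) e he rfl
      exact ⟨d, hMfin.mem_toFinset.2 hdM, hdle⟩⟩

section Machine
open scoped Classical

variable (N : Set (Fin n →₀ ℕ)) (p : (Fin n →₀ ℕ) → (Fin n →₀ ℕ))
  (bas : (Fin n →₀ ℕ) → MvPowerSeries (Fin n) K)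

/-- One step of the division algorithm: at stage `k`, kill (if it exists) the coefficient
at the exponent of rank `k` if that exponent lies in `N`. -/
noncomputable def step (k : ℕ)
    (X : MvPowerSeries (Fin n) K × ((Fin n →₀ ℕ) → MvPowerSeries (Fin n) K)) :
    MvPowerSeries (Fin n) K × ((Fin n →₀ ℕ) → MvPowerSeries (Fin n) K) :=
  if h : ∃ e, e ∈ N ∧ rank e = k then
    (X.1 - (coeff h.choose X.1) •
        (monomial (h.choose - p h.choose) 1 * bas (p h.choose)),
     Function.update X.2 (p h.choose)
        (X.2 (p h.choose) + monomial (h.choose - p h.choose) (coeff h.choose X.1)))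
  else X

/-- The successive remainders/quotients of the division algorithm. -/
noncomputable def stages (F : MvPowerSeries (Fin n) K) : ℕ →
    MvPowerSeries (Fin n) K × ((Fin n →₀ ℕ) → MvPowerSeries (Fin n) K)
  | 0 => (F, fun _ => 0)
  | k + 1 => step N p bas k (stages F k)

variable {N p bas}
variable {B : Finset (Fin n →₀ ℕ)}
  (hpB : ∀ e ∈ N, p e ∈ B) (hple : ∀ e ∈ N, p e ≤ e)
  (hsupp : ∀ d ∈ B, ∀ x, coeff x (bas d) ≠ 0 → dLe d x)
  (hone : ∀ d ∈ B, coeff d (bas d) = 1)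

include hpB hple hsupp in
/-- The killer series used at `e` is supported degLex-above `e`. -/
lemma killer_supp {e x : Fin n →₀ ℕ} (he : e ∈ N)
    (hx : coeff x (monomial (e - p e) 1 * bas (p e)) ≠ 0) : dLe e x := by
  rw [MvPowerSeries.coeff_monomial_mul] at hx
  by_cases hle : e - p e ≤ x
  · rw [if_pos hle, one_mul] at hx
    have h1 : dLe (p e) (x - (e - p e)) := hsupp _ (hpB e he) _ hx
    have h2 : dLe ((e - p e) + p e) ((e - p e) + (x - (e - p e))) := dLe_add_left _ h1
    rwa [tsub_add_cancel_of_le (hple e he), add_tsub_cancel_of_le hle] at h2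
  · rw [if_neg hle] at hx
    exact absurd rfl hx

include hpB hple hsupp in
/-- Stepping at stage `k` does not change remainder coefficients of rank `< k`. -/
lemma coeff_step_fst (k : ℕ) (X : MvPowerSeries (Fin n) K × ((Fin n →₀ ℕ) → MvPowerSeries (Fin n) K))
    {x : Fin n →₀ ℕ} (hx : rank x < k) :
    coeff x (step N p bas k X).1 = coeff x X.1 := by
  rw [step]
  split_ifs with h
  · obtain ⟨he, hrk⟩ := h.choose_spec
    simp only
    rw [map_sub, map_smul]
    have h0 : coeff x (monomial (h.choose - p h.choose) 1 * bas (p h.choose)) = 0 := by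
      by_contra h0
      have := rank_le_rank (killer_supp hpB hple hsupp he h0)
      omega
    rw [h0, smul_zero, sub_zero]
  · rfl

include hple in
/-- Stepping at stage `k` does not change quotient coefficients with `rank (a + d) < k`. -/
lemma coeff_step_snd (k : ℕ) (X : MvPowerSeries (Fin n) K × ((Fin n →₀ ℕ) → MvPowerSeries (Fin n) K))
    {d a : Fin n →₀ ℕ} (ha : rank (a + d) < k) :
    coeff a ((step N p bas k X).2 d) = coeff a (X.2 d) := by
  rw [step]
  split_ifs with h
  · obtain ⟨he, hrk⟩ := h.choose_spec
    simp only
    rw [Function.update_apply]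
    split_ifs with hd
    · subst hd
      rw [map_add, MvPowerSeries.coeff_monomial]
      split_ifs with hae
      · exfalso
        subst hae
        rw [tsub_add_cancel_of_le (hple _ he)] at ha
        omega
      · rw [add_zero]
    · rfl
  · rfl

include hpB hple hsupp in
/-- Remainder coefficients stabilize after stage `rank x + 1`. -/
lemma stages_fst_stable (F : MvPowerSeries (Fin n) K) {x : Fin n →₀ ℕ} {k : ℕ}
    (hk : rank x + 1 ≤ k) :
    coeff x (stages N p bas F k).1 = coeff x (stages N p bas F (rank x + 1)).1 := by
  induction k, hk using Nat.le_induction with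
  | base => rfl
  | succ k hk ih =>
    rw [stages, coeff_step_fst hpB hple hsupp k _ (by omega), ih]

include hple in
/-- Quotient coefficients stabilize after stage `rank (a + d) + 1`. -/
lemma stages_snd_stable (F : MvPowerSeries (Fin n) K) {d a : Fin n →₀ ℕ} {k : ℕ}
    (hk : rank (a + d) + 1 ≤ k) :
    coeff a ((stages N p bas F k).2 d) =
      coeff a ((stages N p bas F (rank (a + d) + 1)).2 d) := by
  induction k, hk using Nat.le_induction with
  | base => rfl
  | succ k hk ih =>
    rw [stages, coeff_step_snd hple k _ (by omega), ih]

include hpB hple hsupp hone in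
/-- After stage `rank e + 1`, the coefficient at `e ∈ N` of the remainder is `0`. -/
lemma stages_kill (F : MvPowerSeries (Fin n) K) {e : Fin n →₀ ℕ} (he : e ∈ N) {k : ℕ}
    (hk : rank e + 1 ≤ k) :
    coeff e (stages N p bas F k).1 = 0 := by
  rw [stages_fst_stable hpB hple hsupp F hk]
  have h : ∃ e', e' ∈ N ∧ rank e' = rank e := ⟨e, he, rfl⟩
  have hch : h.choose = e := rank_injective h.choose_spec.2
  rw [stages, step, dif_pos h]
  simp only [hch]
  rw [map_sub, map_smul]
  have hco : coeff e (monomial (e - p e) 1 * bas (p e)) = 1 := by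
    rw [MvPowerSeries.coeff_monomial_mul, if_pos tsub_le_self, one_mul,
      tsub_tsub_cancel_of_le (hple e he)]
    exact hone _ (hpB e he)
  rw [hco, smul_eq_mul, mul_one, sub_self]

include hpB in
/-- The fundamental invariant: `F = ∑_{d ∈ B} Q_d · bas d + remainder` at every stage. -/
lemma stages_invariant (F : MvPowerSeries (Fin n) K) (k : ℕ) :
    F = (∑ d ∈ B, (stages N p bas F k).2 d * bas d) + (stages N p bas F k).1 := by
  induction k with
  | zero =>
    simp [stages]
  | succ k ih =>
    rw [stages, step]
    split_ifs with h
    · obtain ⟨he, _⟩ := h.choose_spec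
      simp only
      set e := h.choose
      set X := stages N p bas F k
      set c := coeff e X.1
      set t := e - p e
      have hpe : p e ∈ B := hpB e he
      have hsum : ∑ d ∈ B, (Function.update X.2 (p e) (X.2 (p e) + monomial t c)) d * bas d
          = (∑ d ∈ B, X.2 d * bas d) + monomial t c * bas (p e) := by
        rw [← Finset.sum_erase_add _ _ hpe, ← Finset.sum_erase_add _ _ hpe]
        rw [Function.update_self]
        have hrest : ∑ d ∈ B.erase (p e),
            (Function.update X.2 (p e) (X.2 (p e) + monomial t c)) d * bas d
            = ∑ d ∈ B.erase (p e), X.2 d * bas d := by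
          refine Finset.sum_congr rfl fun d hd => ?_
          rw [Function.update_of_ne (Finset.ne_of_mem_erase hd)]
        rw [hrest, add_mul]
        ring
      rw [hsum]
      have hmc : monomial t c * bas (p e) = c • (monomial t 1 * bas (p e)) := by
        rw [← smul_mul_assoc]
        congr 1
        rw [← map_smul, smul_eq_mul, mul_one]
      rw [hmc]
      calc F = (∑ d ∈ B, X.2 d * bas d) + X.1 := ih
        _ = (∑ d ∈ B, X.2 d * bas d) + c • (monomial t 1 * bas (p e))
            + (X.1 - c • (monomial t 1 * bas (p e))) := by ring
    · exact ih

end Machine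

end S9

/-- Let `I` be an ideal in `k[[y]]` with diagram `N = N(I)`, and let
`k[[y]]^N = { F : supp F ⊆ ℕ^n \ N }`.  Then `k[[y]] = I ⊕ k[[y]]^N` as `k`-vector
spaces: every `F` decomposes uniquely as a sum of an element of `I` and a series
supported outside `N(I)`. -/
theorem statement9 {K : Type*} [Field K] {n : ℕ}
    (I : Ideal (MvPowerSeries (Fin n) K)) :
    ∀ F : MvPowerSeries (Fin n) K,
      ∃! p : MvPowerSeries (Fin n) K × MvPowerSeries (Fin n) K,
        p.1 ∈ I ∧
        (∀ d : Fin n →₀ ℕ, MvPowerSeries.coeff d p.2 ≠ 0 → d ∉ diagramOf I) ∧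
        F = p.1 + p.2 := by
  classical
  intro F
  set N : Set (Fin n →₀ ℕ) := diagramOf I with hN
  obtain ⟨B, hBN, hBcov⟩ := S9.dickson N
  -- choose the picking function
  have hpick : ∀ e, e ∈ N → ∃ d, d ∈ B ∧ d ≤ e := by
    intro e he
    obtain ⟨d, h1, h2⟩ := hBcov e he
    exact ⟨d, h1, h2⟩
  choose p0 hp0 using hpick
  set p : (Fin n →₀ ℕ) → (Fin n →₀ ℕ) := fun e => if h : e ∈ N then p0 e h else e with hp
  have hpB : ∀ e ∈ N, p e ∈ B := by
    intro e he
    rw [hp]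
    simp only [dif_pos he]
    exact (hp0 e he).1
  have hple : ∀ e ∈ N, p e ≤ e := by
    intro e he
    rw [hp]
    simp only [dif_pos he]
    exact (hp0 e he).2
  -- choose the normalized basis series
  have hbd : ∀ d, d ∈ B → ∃ G : MvPowerSeries (Fin n) K, G ∈ I ∧ G ≠ 0 ∧ IsExpOf G d := by
    intro d hd
    obtain ⟨G, h1, h2, h3⟩ := hBN hd
    exact ⟨G, h1, h2, h3⟩
  choose g0 hg0 using hbd
  set bas : (Fin n →₀ ℕ) → MvPowerSeries (Fin n) K :=
    fun d => if h : d ∈ B then (coeff d (g0 d h))⁻¹ • g0 d h else 1 with hbas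
  have hbasd : ∀ d (hd : d ∈ B), bas d = (coeff d (g0 d hd))⁻¹ • g0 d hd := by
    intro d hd
    rw [hbas]
    simp only [dif_pos hd]
  have hbasI : ∀ d ∈ B, bas d ∈ I := by
    intro d hd
    rw [hbasd d hd]
    exact Submodule.smul_of_tower_mem _ _ (hg0 d hd).1
  have hone : ∀ d ∈ B, coeff d (bas d) = 1 := by
    intro d hd
    rw [hbasd d hd, map_smul, smul_eq_mul]
    exact inv_mul_cancel₀ ((hg0 d hd).2.2).1
  have hsupp : ∀ d ∈ B, ∀ x, coeff x (bas d) ≠ 0 → S9.dLe d x := by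
    intro d hd x hx
    rw [hbasd d hd, map_smul, smul_eq_mul] at hx
    have : coeff x (g0 d hd) ≠ 0 := right_ne_zero_of_mul hx
    exact (S9.isExpOf_iff.1 (hg0 d hd).2.2).2 x this
  -- run the division algorithm
  set S := S9.stages N p bas F with hS
  set H : MvPowerSeries (Fin n) K :=
    (fun x => coeff x (S (S9.rank x + 1)).1) with hH
  have hHco : ∀ x, coeff x H = coeff x (S (S9.rank x + 1)).1 := by
    intro x
    rw [hH]
    rfl
  set Q : (Fin n →₀ ℕ) → MvPowerSeries (Fin n) K :=
    (fun d => fun x => coeff x ((S (S9.rank (x + d) + 1)).2 d)) with hQ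
  have hQco : ∀ d x, coeff x (Q d) = coeff x ((S (S9.rank (x + d) + 1)).2 d) := by
    intro d x
    rw [hQ]
    rfl
  set G : MvPowerSeries (Fin n) K := ∑ d ∈ B, Q d * bas d with hG
  have hGI : G ∈ I := Ideal.sum_mem I fun d hd => I.mul_mem_left _ (hbasI d hd)
  have hHN : ∀ x, coeff x H ≠ 0 → x ∉ N := by
    intro x hx hxN
    refine hx ?_
    rw [hHco]
    exact S9.stages_kill hpB hple hsupp hone F hxN (le_refl _)
  have hFGH : F = G + H := by
    refine MvPowerSeries.ext fun x => ?_
    rw [map_add]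
    have hinv := S9.stages_invariant (bas := bas) hpB F (S9.rank x + 1)
    have h2 : ∀ d ∈ B, coeff x ((S (S9.rank x + 1)).2 d * bas d)
        = coeff x (Q d * bas d) := by
      intro d hd
      rw [MvPowerSeries.coeff_mul, MvPowerSeries.coeff_mul]
      refine Finset.sum_congr rfl fun ab hab => ?_
      rw [Finset.HasAntidiagonal.mem_antidiagonal] at hab
      by_cases hb : coeff ab.2 (bas d) = 0
      · rw [hb, mul_zero, mul_zero]
      · congr 1
        have hdb : S9.dLe d ab.2 := hsupp d hd ab.2 hb
        have hsum : S9.dLe (ab.1 + d) (ab.1 + ab.2) := S9.dLe_add_left _ hdb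
        rw [hab] at hsum
        have hrk : S9.rank (ab.1 + d) + 1 ≤ S9.rank x + 1 := by
          have := S9.rank_le_rank hsum
          omega
        rw [hQco d ab.1, S9.stages_snd_stable hple F hrk]
    calc coeff x F
        = (∑ d ∈ B, coeff x ((S (S9.rank x + 1)).2 d * bas d))
            + coeff x (S (S9.rank x + 1)).1 := by
          conv_lhs => rw [hinv]
          rw [map_add, map_sum]
      _ = (∑ d ∈ B, coeff x (Q d * bas d)) + coeff x H := by
          rw [Finset.sum_congr rfl h2, hHco]
      _ = coeff x G + coeff x H := by
          rw [hG, map_sum]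
  refine ⟨(G, H), ⟨hGI, fun d hd => hHN d hd, hFGH⟩, ?_⟩
  rintro ⟨G', H'⟩ ⟨hG'I, hH', hF'⟩
  have hkey : G' - G = 0 := by
    by_contra h0
    obtain ⟨d, hexp⟩ := S9.exists_isExp h0
    have hdN : d ∈ N := ⟨G' - G, I.sub_mem hG'I hGI, h0, hexp⟩
    have hsum : G + H = G' + H' := by rw [← hFGH, ← hF']
    have h3 : H - H' = G' - G := by linear_combination hsum
    have hHH' : coeff d H - coeff d H' = coeff d (G' - G) := by
      rw [← h3, map_sub]
    have hd0 : coeff d (G' - G) ≠ 0 := hexp.1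
    by_cases hcH : coeff d H = 0
    · have hH'd : coeff d H' ≠ 0 := by
        intro h
        rw [hcH, h, sub_zero] at hHH'
        exact hd0 (by rw [← hHH'])
      exact hH' d hH'd hdN
    · exact hHN d hcH hdN
  have hG'G : G' = G := sub_eq_zero.1 hkey
  have hH'H : H' = H := by
    have : G + H = G' + H' := by rw [← hFGH, ← hF']
    rw [hG'G] at this
    exact (add_left_cancel this).symm
  exact Prod.ext hG'G hH'H
end

section
/- Let I be an ideal of k[[y₁,…,y_n]]. Then the Hilbert–Samuel function H_I(k) = #{β ∈ ℕ^n \ N(I) : |β| ≤ k} agrees with a polynomial in k for all sufficiently large k. -/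
open MvPowerSeries

lemma sum_add_apply {n : ℕ} (a b : Fin n →₀ ℕ) :
    ∑ i, (a + b) i = (∑ i, a i) + ∑ i, b i := by
  simp [Finsupp.add_apply, Finset.sum_add_distrib]

lemma degLexLt_cancel {n : ℕ} {c a b : Fin n →₀ ℕ}
    (h : degLexLt (c + a) (c + b)) : degLexLt a b := by
  unfold degLexLt at *
  rw [Prod.Lex.toLex_lt_toLex] at h ⊢
  rcases h with h | ⟨h1, h2⟩
  · left
    simp only [sum_add_apply] at h
    omega
  · right
    constructor
    · simp only [sum_add_apply] at h1; omega
    · have hadd : ∀ x y : Fin n →₀ ℕ, toLex (x + y) = toLex x + toLex y := fun _ _ => rfl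
      by_contra hle
      rw [not_lt] at hle
      have : toLex (c + b) ≤ toLex (c + a) := by
        rw [hadd, hadd]
        exact add_le_add_right hle _
      exact absurd h2 (not_lt.2 this)

lemma diagram_upper {K : Type*} [Field K] {n : ℕ}
    {I : Ideal (MvPowerSeries (Fin n) K)} {d : Fin n →₀ ℕ}
    (hd : d ∈ diagramOf I) {β : Fin n →₀ ℕ} (hdβ : d ≤ β) : β ∈ diagramOf I := by
  obtain ⟨F, hFI, -, hcF, hmin⟩ := hd
  set c : Fin n →₀ ℕ := β - d with hc
  have hβ : β = c + d := by
    rw [hc, add_comm]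
    exact (add_tsub_cancel_of_le hdβ).symm
  refine ⟨monomial c 1 * F, I.mul_mem_left _ hFI, ?_, ?_, ?_⟩
  · intro h0
    have := coeff_add_monomial_mul (R := K) (m := c) (n := d) (φ := F) 1
    rw [h0, map_zero, one_mul] at this
    exact hcF this.symm
  · rw [hβ]
    rw [coeff_add_monomial_mul]
    simpa using hcF
  · intro e he hlt
    rw [coeff_monomial_mul] at he
    by_cases hce : c ≤ e
    · rw [if_pos hce, one_mul] at he
      have heq : e = c + (e - c) := (add_tsub_cancel_of_le hce).symm
      apply hmin (e - c) he
      apply degLexLt_cancel (c := c)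
      rw [← heq, ← hβ]
      exact hlt
    · rw [if_neg hce] at he
      exact he rfl

lemma exists_basis {n : ℕ} (U : Set (Fin n →₀ ℕ))
    (hU : ∀ d ∈ U, ∀ β, d ≤ β → β ∈ U) :
    ∃ B : Finset (Fin n →₀ ℕ), ∀ β, β ∈ U ↔ ∃ b ∈ B, b ≤ β := by
  classical
  set M : Set (Fin n →₀ ℕ) := {m | m ∈ U ∧ ∀ w ∈ U, w ≤ m → w = m} with hM
  have hanti : IsAntichain (· ≤ ·) M := by
    intro x hx y hy hxy hle
    exact hxy (hy.2 x hx.1 hle)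
  have hfin : M.Finite :=
    hanti.finite_of_partiallyWellOrderedOn (Set.isPWO_of_wellQuasiOrderedLE M)
  refine ⟨hfin.toFinset, fun β => ⟨fun hβ => ?_, fun ⟨b, hb, hbβ⟩ => ?_⟩⟩
  · set S : Set (Fin n →₀ ℕ) := {v | v ∈ U ∧ v ≤ β} with hS
    have hSwf : S.IsWF := (Set.isPWO_of_wellQuasiOrderedLE S).isWF
    have hSne : S.Nonempty := ⟨β, hβ, le_rfl⟩
    refine ⟨hSwf.min hSne, ?_, (hSwf.min_mem hSne).2⟩
    rw [Set.Finite.mem_toFinset]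
    refine ⟨(hSwf.min_mem hSne).1, fun w hw hwle => ?_⟩
    have hwS : w ∈ S := ⟨hw, hwle.trans (hSwf.min_mem hSne).2⟩
    have hnlt := hSwf.not_lt_min hSne hwS
    by_contra hne
    exact hnlt (lt_of_le_of_ne hwle hne)
  · rw [Set.Finite.mem_toFinset] at hb
    exact hU b hb.1 β hbβ

lemma toMultiset_card_fin {N : ℕ} (f : Fin N →₀ ℕ) :
    Multiset.card (Finsupp.toMultiset f) = ∑ i, f i := by
  rw [Finsupp.card_toMultiset]
  exact Finsupp.sum_fintype _ _ (fun i => rfl)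

lemma sum_cons_fin {n : ℕ} (y : ℕ) (s : Fin n →₀ ℕ) :
    ∑ i, (Finsupp.cons y s) i = y + ∑ i, s i := by
  rw [Fin.sum_univ_succ]
  simp [Finsupp.cons_zero, Finsupp.cons_succ]

noncomputable def sumEqSymEquiv (n m : ℕ) :
    {δ : Fin (n + 1) →₀ ℕ // ∑ i, δ i = m} ≃ Sym (Fin (n + 1)) m where
  toFun δ := ⟨Finsupp.toMultiset δ.1, by rw [toMultiset_card_fin]; exact δ.2⟩
  invFun s := ⟨Multiset.toFinsupp s.1, by
    rw [← toMultiset_card_fin, Multiset.toFinsupp_toMultiset]; exact s.2⟩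
  left_inv δ := Subtype.ext (Finsupp.toMultiset_toFinsupp δ.1)
  right_inv s := Subtype.ext (Multiset.toFinsupp_toMultiset s.1)

noncomputable def sumLeEquiv (n m : ℕ) :
    {γ : Fin n →₀ ℕ // ∑ i, γ i ≤ m} ≃ {δ : Fin (n + 1) →₀ ℕ // ∑ i, δ i = m} where
  toFun γ := ⟨Finsupp.cons (m - ∑ i, γ.1 i) γ.1, by
    rw [sum_cons_fin]; have := γ.2; omega⟩
  invFun δ := ⟨Finsupp.tail δ.1, by
    have h2 := δ.2
    rw [Fin.sum_univ_succ] at h2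
    have he : ∑ i, (Finsupp.tail δ.1) i = ∑ i : Fin n, δ.1 i.succ := by
      simp [Finsupp.tail_apply]
    omega⟩
  left_inv γ := Subtype.ext (by simp [Finsupp.tail_cons])
  right_inv δ := Subtype.ext (by
    have h2 := δ.2
    rw [Fin.sum_univ_succ] at h2
    have he : ∑ i, (Finsupp.tail δ.1) i = ∑ i : Fin n, δ.1 i.succ := by
      simp [Finsupp.tail_apply]
    show Finsupp.cons (m - ∑ i, (Finsupp.tail δ.1) i) (Finsupp.tail δ.1) = δ.1
    have h3 : m - ∑ i, (Finsupp.tail δ.1) i = δ.1 0 := by omega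
    rw [h3]
    exact Finsupp.cons_tail _)

lemma card_sum_le (n m : ℕ) :
    Nat.card {γ : Fin n →₀ ℕ // ∑ i, γ i ≤ m} = (m + n).choose n := by
  classical
  rw [Nat.card_congr ((sumLeEquiv n m).trans (sumEqSymEquiv n m)),
    Nat.card_eq_fintype_card, Sym.card_sym_eq_choose]
  simp only [Fintype.card_fin]
  have h1 : n + 1 + m - 1 = m + n := by omega
  rw [h1]
  exact Nat.choose_symm_add

noncomputable def simplexF (n m : ℕ) : Finset (Fin n →₀ ℕ) :=
  Finset.filter (fun γ => ∑ i, γ i ≤ m)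
    (Finset.Iic (Finsupp.equivFunOnFinite.symm fun _ => m))

lemma mem_simplexF {n m : ℕ} {γ : Fin n →₀ ℕ} :
    γ ∈ simplexF n m ↔ ∑ i, γ i ≤ m := by
  simp only [simplexF, Finset.mem_filter, Finset.mem_Iic, and_iff_right_iff_imp]
  intro h
  rw [Finsupp.le_def]
  intro i
  simp only [Finsupp.equivFunOnFinite_symm_apply_apply]
  calc γ i ≤ ∑ j, γ j := Finset.single_le_sum (fun _ _ => Nat.zero_le _) (Finset.mem_univ i)
    _ ≤ m := h

lemma card_simplexF (n m : ℕ) : (simplexF n m).card = (m + n).choose n := by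
  classical
  rw [← card_sum_le n m, ← Fintype.card_coe, ← Nat.card_eq_fintype_card]
  exact Nat.card_congr (Equiv.subtypeEquivRight (fun γ => mem_simplexF))

lemma card_shift {n k : ℕ} (a : Fin n →₀ ℕ) (h : ∑ i, a i ≤ k) :
    ((simplexF n k).filter (fun β => a ≤ β)).card = (simplexF n (k - ∑ i, a i)).card := by
  classical
  apply Finset.card_bij' (fun β _ => β - a) (fun γ _ => a + γ)
  · intro β hβ
    rw [Finset.mem_filter] at hβ
    obtain ⟨hβ1, hβ2⟩ := hβ
    rw [mem_simplexF] at hβ1 ⊢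
    have hsum : ∑ i, a i + ∑ i, (β - a) i = ∑ i, β i := by
      rw [← Finset.sum_add_distrib]
      apply Finset.sum_congr rfl
      intro i _
      have := hβ2 i
      rw [Finsupp.tsub_apply]
      omega
    omega
  · intro γ hγ
    rw [mem_simplexF] at hγ
    rw [Finset.mem_filter, mem_simplexF]
    constructor
    · have : ∑ i, (a + γ) i = ∑ i, a i + ∑ i, γ i := by
        simp [Finsupp.add_apply, Finset.sum_add_distrib]
      omega
    · exact le_add_right le_rfl
  · intro β hβ
    rw [Finset.mem_filter] at hβ
    exact add_tsub_cancel_of_le hβ.2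
  · intro γ _
    exact add_tsub_cancel_left a γ

lemma prod_shift_eval (n m : ℕ) :
    ∏ i ∈ Finset.range n, ((m : ℚ) + i + 1) = (n.factorial : ℚ) * (m + n).choose n := by
  induction n with
  | zero => simp
  | succ n ih =>
    rw [Finset.prod_range_succ, ih]
    have key : (m + n + 1) * (m + n).choose n = (n + 1) * (m + n + 1).choose (n + 1) := by
      have h := Nat.add_one_mul_choose_eq (m + n) n
      simpa [Nat.succ_eq_add_one, Nat.mul_comm] using h
    have : ((m + n + 1 : ℕ) : ℚ) * ((m + n).choose n : ℚ)
        = ((n + 1 : ℕ) : ℚ) * ((m + n + 1).choose (n + 1) : ℚ) := by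
      exact_mod_cast congrArg (Nat.cast : ℕ → ℚ) key
    rw [Nat.factorial_succ]
    have harg : m + (n + 1) = m + n + 1 := by omega
    rw [harg]
    push_cast at this ⊢
    linear_combination (n.factorial : ℚ) * this

noncomputable def Qpoly (n : ℕ) : Polynomial ℚ :=
  Polynomial.C ((n.factorial : ℚ)⁻¹) *
    ∏ i ∈ Finset.range n, (Polynomial.X + Polynomial.C (i : ℚ) + 1)

lemma Qpoly_eval (n m : ℕ) : (Qpoly n).eval (m : ℚ) = ((m + n).choose n : ℚ) := by
  rw [Qpoly]
  simp only [Polynomial.eval_mul, Polynomial.eval_C, Polynomial.eval_prod,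
    Polynomial.eval_add, Polynomial.eval_X, Polynomial.eval_one]
  rw [prod_shift_eval]
  have : (n.factorial : ℚ) ≠ 0 := Nat.cast_ne_zero.2 (Nat.factorial_ne_zero n)
  field_simp

theorem statement11' {n : ℕ} (U : Set (Fin n →₀ ℕ)) (B : Finset (Fin n →₀ ℕ))
    (hB : ∀ β, β ∈ U ↔ ∃ b ∈ B, b ≤ β) :
    ∃ P : Polynomial ℚ, ∃ k₀ : ℕ, ∀ k ≥ k₀,
      (Set.ncard {β : Fin n →₀ ℕ | β ∉ U ∧ (∑ i, β i) ≤ k} : ℚ) = P.eval (k : ℚ) := by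
  classical
  set σ : Finset (Fin n →₀ ℕ) → ℕ := fun T => ∑ i, (T.sup id) i with hσdef
  set k₀ : ℕ := ∑ b ∈ B, ∑ i, b i with hk₀
  have hσle : ∀ T ∈ B.powerset, σ T ≤ k₀ := by
    intro T hT
    rw [Finset.mem_powerset] at hT
    have h1 : T.sup id ≤ ∑ b ∈ T, b :=
      Finset.sup_le fun b hb => Finset.single_le_sum (f := fun b => b)
        (fun _ _ => zero_le) hb
    calc σ T ≤ ∑ i, (∑ b ∈ T, b) i := Finset.sum_le_sum fun i _ => h1 i
      _ = ∑ b ∈ T, ∑ i, b i := by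
          simp only [Finsupp.finset_sum_apply]
          rw [Finset.sum_comm]
      _ ≤ k₀ := Finset.sum_le_sum_of_subset hT
  refine ⟨∑ T ∈ B.powerset, Polynomial.C ((-1 : ℚ) ^ T.card) *
      (Qpoly n).comp (Polynomial.X - Polynomial.C (σ T : ℚ)), k₀, fun k hk => ?_⟩
  have hset : {β : Fin n →₀ ℕ | β ∉ U ∧ (∑ i, β i) ≤ k}
      = ↑((simplexF n k).filter (fun β => β ∉ U)) := by
    ext β
    simp only [Set.mem_setOf_eq, Finset.coe_filter, Finset.mem_filter, mem_simplexF]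
    tauto
  rw [hset, Set.ncard_coe_finset]
  have hpoint : ∀ β : Fin n →₀ ℕ, (if β ∉ U then (1 : ℚ) else 0)
      = ∑ T ∈ B.powerset, (-1 : ℚ) ^ T.card * (if T.sup id ≤ β then 1 else 0) := by
    intro β
    have h1 : (if β ∉ U then (1 : ℚ) else 0)
        = ∏ b ∈ B, ((-(if b ≤ β then (1 : ℚ) else 0)) + 1) := by
      by_cases hβ : β ∈ U
      · obtain ⟨b, hbB, hbβ⟩ := (hB β).1 hβ
        rw [if_neg (by simpa using hβ),
          Finset.prod_eq_zero hbB (by rw [if_pos hbβ]; ring)]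
      · rw [if_pos hβ, Finset.prod_eq_one]
        intro b hb
        have hnle : ¬ b ≤ β := fun hle => hβ ((hB β).2 ⟨b, hb, hle⟩)
        rw [if_neg hnle]; ring
    rw [h1, Finset.prod_add]
    apply Finset.sum_congr rfl
    intro T hT
    rw [Finset.prod_const_one, mul_one]
    by_cases hsup : T.sup id ≤ β
    · rw [if_pos hsup, mul_one,
        Finset.prod_congr rfl (fun b hb =>
          show (-if b ≤ β then (1 : ℚ) else 0) = -1 by
            rw [if_pos (show b ≤ β from le_trans (Finset.le_sup (f := id) hb) hsup)]),
        Finset.prod_const]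
    · rw [if_neg hsup, mul_zero]
      obtain ⟨b, hbT, hble⟩ : ∃ b ∈ T, ¬ b ≤ β := by
        by_contra hall
        push_neg at hall
        exact hsup (Finset.sup_le fun b hb => hall b hb)
      exact Finset.prod_eq_zero hbT (by rw [if_neg hble]; ring)
  have hcount : ∀ T ∈ B.powerset,
      (∑ β ∈ simplexF n k, (if T.sup id ≤ β then (1 : ℚ) else 0))
        = (((k - σ T) + n).choose n : ℚ) := by
    intro T hT
    rw [Finset.sum_boole,
      card_shift (T.sup id) (le_trans (hσle T hT) hk), card_simplexF]
  calc (((simplexF n k).filter (fun β => β ∉ U)).card : ℚ)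
      = ∑ β ∈ simplexF n k, (if β ∉ U then (1 : ℚ) else 0) := by
        rw [Finset.sum_boole]
    _ = ∑ β ∈ simplexF n k, ∑ T ∈ B.powerset,
          (-1 : ℚ) ^ T.card * (if T.sup id ≤ β then 1 else 0) := by
        exact Finset.sum_congr rfl fun β _ => hpoint β
    _ = ∑ T ∈ B.powerset, (-1 : ℚ) ^ T.card *
          ∑ β ∈ simplexF n k, (if T.sup id ≤ β then (1 : ℚ) else 0) := by
        rw [Finset.sum_comm]
        exact Finset.sum_congr rfl fun T _ => by rw [Finset.mul_sum]
    _ = ∑ T ∈ B.powerset, (-1 : ℚ) ^ T.card * (((k - σ T) + n).choose n : ℚ) := by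
        exact Finset.sum_congr rfl fun T hT => by rw [hcount T hT]
    _ = Polynomial.eval (k : ℚ) (∑ T ∈ B.powerset, Polynomial.C ((-1 : ℚ) ^ T.card) *
          (Qpoly n).comp (Polynomial.X - Polynomial.C (σ T : ℚ))) := by
        rw [Polynomial.eval_finset_sum]
        apply Finset.sum_congr rfl
        intro T hT
        rw [Polynomial.eval_mul, Polynomial.eval_C, Polynomial.eval_comp,
          Polynomial.eval_sub, Polynomial.eval_X, Polynomial.eval_C]
        congr 1
        rw [show ((k : ℚ) - (σ T : ℚ)) = ((k - σ T : ℕ) : ℚ) from by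
          rw [Nat.cast_sub (le_trans (hσle T hT) hk)], Qpoly_eval]

/-- Let `I` be an ideal of `k[[y₁,…,y_n]]`.  Then the Hilbert–Samuel
function `H_I(k) = #{β ∈ ℕ^n \ N(I) : |β| ≤ k}` agrees with a polynomial in `k` for all
sufficiently large `k`. -/
theorem statement11 {K : Type*} [Field K] {n : ℕ}
    (I : Ideal (MvPowerSeries (Fin n) K)) :
    ∃ P : Polynomial ℚ, ∃ k₀ : ℕ, ∀ k ≥ k₀,
      (Set.ncard {β : Fin n →₀ ℕ | β ∉ diagramOf I ∧ (∑ i, β i) ≤ k} : ℚ) =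
        P.eval (k : ℚ) := by
  obtain ⟨B, hB⟩ := exists_basis (diagramOf I) (fun d hd β hle => diagram_upper hd hle)
  exact statement11' (diagramOf I) B hB
end

section
/- Let I be an ideal in k[[y]] with diagram N(I) having vertices α¹,…,α^s, and let F₁,…,F_s ∈ I with exp F_i = α^i. Define Δ_i = (α^i + ℕ^n) \ ⋃_{j<i} Δ_j. Then N(I) = ⋃_{i=1}^s Δ_i, and F₁,…,F_s generate I. -/
open MvPowerSeries

namespace S12

open scoped Classical

/-- The deg-lex embedding. -/
def D {n : ℕ} (a : Fin n →₀ ℕ) : Lex (ℕ × Lex (Fin n →₀ ℕ)) :=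
  toLex ((∑ i, a i : ℕ), toLex a)

lemma degLexLt_iff {n : ℕ} {a b : Fin n →₀ ℕ} : degLexLt a b ↔ D a < D b := Iff.rfl

lemma D_injective {n : ℕ} : Function.Injective (D (n := n)) := by
  intro a b h
  exact congrArg (fun x => ofLex (ofLex x).2) h

lemma D_add_lt_iff {n : ℕ} (c a b : Fin n →₀ ℕ) : D (c + a) < D (c + b) ↔ D a < D b := by
  have hsum : ∀ x y : Fin n →₀ ℕ, (∑ i, (x + y) i) = (∑ i, x i) + ∑ i, y i := by
    intro x y
    simp [Finsupp.add_apply, Finset.sum_add_distrib]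
  have hlex : ∀ x y : Fin n →₀ ℕ,
      (toLex (c + x) : Lex (Fin n →₀ ℕ)) = toLex c + toLex x := fun _ _ => rfl
  simp only [D, Prod.Lex.lt_iff, ofLex_toLex, hsum, hlex]
  constructor
  · rintro (h | ⟨h1, h2⟩)
    · exact Or.inl (by omega)
    · exact Or.inr ⟨by omega, lt_of_add_lt_add_left h2⟩
  · rintro (h | ⟨h1, h2⟩)
    · exact Or.inl (by omega)
    · exact Or.inr ⟨by omega, add_lt_add_right h2 _⟩

lemma D_add_le_iff {n : ℕ} (c a b : Fin n →₀ ℕ) : D (c + a) ≤ D (c + b) ↔ D a ≤ D b := by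
  rw [← not_lt, ← not_lt, D_add_lt_iff]

lemma finite_D_le {n : ℕ} (e : Fin n →₀ ℕ) : {x : Fin n →₀ ℕ | D x ≤ D e}.Finite := by
  set N := ∑ i, e i with hN
  have h1 : {x : Fin n →₀ ℕ | D x ≤ D e} ⊆ {x | ∀ i, x i ≤ N} := by
    intro x hx i
    have hdeg : (∑ j, x j) ≤ N := by
      rcases Prod.Lex.le_iff.mp hx with h | ⟨h, _⟩
      · exact le_of_lt h
      · exact le_of_eq h
    calc x i ≤ ∑ j, x j := Finset.single_le_sum (fun j _ => Nat.zero_le _) (Finset.mem_univ i)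
      _ ≤ N := hdeg
  refine Set.Finite.subset ?_ h1
  haveI : Finite ↥{x : Fin n →₀ ℕ | ∀ i, x i ≤ N} := by
    refine Finite.of_injective
      (fun x => (fun i => (⟨x.1 i, Nat.lt_succ_of_le (x.2 i)⟩ : Fin (N + 1)) : Fin n → Fin (N+1)))
      ?_
    intro x y h
    apply Subtype.ext
    ext i
    exact congrArg Fin.val (congrFun h i)
  exact Set.toFinite _

lemma exists_isExpOf {K : Type*} [Field K] {n : ℕ} (F : MvPowerSeries (Fin n) K)
    (hF : F ≠ 0) : ∃ d, IsExpOf F d := by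
  have hex : ∃ x, coeff x F ≠ 0 := by
    by_contra h
    push_neg at h
    exact hF (MvPowerSeries.ext fun d => by rw [h d, map_zero])
  obtain ⟨x₀, hx₀⟩ := hex
  have hfin : {x | coeff x F ≠ 0 ∧ D x ≤ D x₀}.Finite :=
    (finite_D_le x₀).subset fun x hx => hx.2
  have hne : hfin.toFinset.Nonempty := ⟨x₀, by rw [Set.Finite.mem_toFinset]; exact ⟨hx₀, le_rfl⟩⟩
  obtain ⟨d, hdT, hmin⟩ := hfin.toFinset.exists_min_image D hne
  rw [Set.Finite.mem_toFinset] at hdT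
  refine ⟨d, hdT.1, fun e he hlt => ?_⟩
  rw [degLexLt_iff] at hlt
  have heT : e ∈ hfin.toFinset := by
    rw [Set.Finite.mem_toFinset]
    exact ⟨he, le_trans hlt.le hdT.2⟩
  exact absurd (hmin e heT) (not_le.mpr hlt)

lemma isExp_le {K : Type*} [Field K] {n : ℕ} {F : MvPowerSeries (Fin n) K}
    {d : Fin n →₀ ℕ} (h : IsExpOf F d) {e : Fin n →₀ ℕ} (he : coeff e F ≠ 0) :
    D d ≤ D e :=
  not_lt.mp fun hlt => (h.2 e he) (degLexLt_iff.mpr hlt)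

/-- The initial exponent of a power series (junk value `0` for `F = 0`). -/
noncomputable def expOf {K : Type*} [Field K] {n : ℕ} (G : MvPowerSeries (Fin n) K) :
    Fin n →₀ ℕ :=
  if h : G ≠ 0 then Classical.choose (exists_isExpOf G h) else 0

lemma isExpOf_expOf {K : Type*} [Field K] {n : ℕ} {G : MvPowerSeries (Fin n) K}
    (hG : G ≠ 0) : IsExpOf G (expOf G) := by
  rw [expOf, dif_pos hG]
  exact Classical.choose_spec (exists_isExpOf G hG)

section Main

variable {K : Type*} [Field K] {n s : ℕ}
variable (I : Ideal (MvPowerSeries (Fin n) K)) (α : Fin s → (Fin n →₀ ℕ))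
variable (F : Fin s → MvPowerSeries (Fin n) K)

/-- The data chosen at a division step. -/
noncomputable def stepData (r : MvPowerSeries (Fin n) K) : Option (Fin s × (Fin n →₀ ℕ)) :=
  if h : r ∈ I ∧ r ≠ 0 ∧ ∃ i c, expOf r = α i + c then
    some (Classical.choose h.2.2, Classical.choose (Classical.choose_spec h.2.2))
  else none

lemma stepData_spec {r : MvPowerSeries (Fin n) K} {i : Fin s} {c : Fin n →₀ ℕ}
    (h : stepData I α r = some (i, c)) :
    r ∈ I ∧ r ≠ 0 ∧ expOf r = α i + c := by
  rw [stepData] at h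
  split_ifs at h with hc
  simp only [Option.some.injEq, Prod.mk.injEq] at h
  obtain ⟨h1, h2⟩ := h
  subst h1; subst h2
  exact ⟨hc.1, hc.2.1, Classical.choose_spec (Classical.choose_spec hc.2.2)⟩

lemma stepData_eq_some {r : MvPowerSeries (Fin n) K}
    (h : r ∈ I ∧ r ≠ 0 ∧ ∃ i c, expOf r = α i + c) :
    ∃ i c, stepData I α r = some (i, c) := ⟨_, _, dif_pos h⟩

/-- The term subtracted at a division step. -/
noncomputable def sub (r : MvPowerSeries (Fin n) K) : MvPowerSeries (Fin n) K :=
  match stepData I α r with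
  | some (i, c) => (monomial c) (coeff (expOf r) r / coeff (α i) (F i)) * F i
  | none => 0

lemma sub_of_some {r : MvPowerSeries (Fin n) K} {i : Fin s} {c : Fin n →₀ ℕ}
    (h : stepData I α r = some (i, c)) :
    sub I α F r = (monomial c) (coeff (expOf r) r / coeff (α i) (F i)) * F i := by
  rw [sub, h]

lemma sub_of_none {r : MvPowerSeries (Fin n) K} (h : stepData I α r = none) :
    sub I α F r = 0 := by
  rw [sub, h]

lemma sub_isSome_of_ne_zero {r : MvPowerSeries (Fin n) K} (h : sub I α F r ≠ 0) :
    (stepData I α r).isSome := by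
  cases hsd : stepData I α r with
  | none => exact absurd (sub_of_none I α F hsd) h
  | some p => rfl

/-- The sequence of remainders in the division process. -/
noncomputable def rem (G : MvPowerSeries (Fin n) K) : ℕ → MvPowerSeries (Fin n) K
  | 0 => G
  | m + 1 => rem G m - sub I α F (rem G m)

variable {G : MvPowerSeries (Fin n) K}
variable (hFexp : ∀ i, IsExpOf (F i) (α i)) (hFI : ∀ i, F i ∈ I)
variable (hdiag : ∀ r ∈ I, r ≠ 0 → ∃ i c, expOf r = α i + c) (hG : G ∈ I)

include hFI in
lemma sub_mem (r : MvPowerSeries (Fin n) K) : sub I α F r ∈ I := by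
  cases hsd : stepData I α r with
  | none => rw [sub_of_none I α F hsd]; exact zero_mem _
  | some p =>
    obtain ⟨i, c⟩ := p
    rw [sub_of_some I α F hsd]
    exact Ideal.mul_mem_left _ _ (hFI i)

include hFI hG in
lemma rem_mem : ∀ m, rem I α F G m ∈ I
  | 0 => hG
  | m + 1 => Submodule.sub_mem _ (rem_mem m) (sub_mem I α F hFI _)

lemma rem_succ_of_zero {m : ℕ} (h : rem I α F G m = 0) : rem I α F G (m + 1) = 0 := by
  have hsd : stepData I α (rem I α F G m) = none := by
    rw [stepData, dif_neg]
    rw [h]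
    simp
  show rem I α F G m - sub I α F (rem I α F G m) = 0
  rw [sub_of_none I α F hsd, h, sub_zero]

include hFexp in
lemma coeff_step_zero {r : MvPowerSeries (Fin n) K} {i : Fin s} {c : Fin n →₀ ℕ}
    (hr0 : r ≠ 0) (hsd : stepData I α r = some (i, c))
    {e : Fin n →₀ ℕ} (he : D e ≤ D (expOf r)) :
    coeff e (r - sub I α F r) = 0 := by
  obtain ⟨_, _, hexp⟩ := stepData_spec I α hsd
  have hd : IsExpOf r (expOf r) := isExpOf_expOf hr0
  rw [sub_of_some I α F hsd, map_sub, coeff_monomial_mul]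
  rcases eq_or_lt_of_le he with heq | hlt
  · -- e = expOf r
    have he' : e = expOf r := D_injective heq
    subst he'
    have hce : c ≤ expOf r := by
      conv_rhs => rw [hexp]
      exact self_le_add_left c (α i)
    rw [if_pos hce]
    have h5 : expOf r - c = α i := by
      rw [hexp]
      ext j
      simp [Finsupp.tsub_apply, Finsupp.add_apply]
    rw [h5, div_mul_cancel₀ _ (hFexp i).1, sub_self]
  · -- D e < D (expOf r)
    have h1 : coeff e r = 0 := by
      by_contra h
      exact absurd (isExp_le hd h) (not_le.mpr hlt)
    rw [h1, zero_sub, neg_eq_zero]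
    split_ifs with hce
    · have h2 : coeff (e - c) (F i) = 0 := by
        by_contra h
        have h3 : D (α i) ≤ D (e - c) := isExp_le (hFexp i) h
        have h4 : D (expOf r) ≤ D e := by
          calc D (expOf r) = D (c + α i) := by rw [hexp, add_comm]
            _ ≤ D (c + (e - c)) := by
                rw [D_add_le_iff]; exact h3
            _ = D e := by rw [add_tsub_cancel_of_le hce]
        exact absurd h4 (not_le.mpr hlt)
      rw [h2, mul_zero]
    · rfl

include hFexp hFI hdiag hG in
lemma rem_strict {m : ℕ} (h : rem I α F G (m + 1) ≠ 0) :
    rem I α F G m ≠ 0 ∧ D (expOf (rem I α F G m)) < D (expOf (rem I α F G (m + 1))) := by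
  have hr0 : rem I α F G m ≠ 0 := fun hz => h (rem_succ_of_zero I α F hz)
  have hrI : rem I α F G m ∈ I := rem_mem I α F hFI hG m
  obtain ⟨i, c, hsd⟩ := stepData_eq_some I α ⟨hrI, hr0, hdiag _ hrI hr0⟩
  refine ⟨hr0, ?_⟩
  by_contra hle
  rw [not_lt] at hle
  have := coeff_step_zero I α F hFexp hr0 hsd hle
  exact (isExpOf_expOf h).1 this

include hFexp hFI hdiag hG in
lemma rem_mono : ∀ {m m' : ℕ}, m < m' → rem I α F G m' ≠ 0 →
    rem I α F G m ≠ 0 ∧ D (expOf (rem I α F G m)) < D (expOf (rem I α F G m')) := by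
  intro m m' hlt
  induction m' with
  | zero => omega
  | succ m' ih =>
    intro h
    have hs := rem_strict I α F hFexp hFI hdiag hG h
    rcases Nat.lt_succ_iff_lt_or_eq.mp hlt with h' | h'
    · obtain ⟨h1, h2⟩ := ih h' hs.1
      exact ⟨h1, lt_trans h2 hs.2⟩
    · subst h'
      exact hs

include hFexp hFI hdiag hG in
lemma step_uniq {m m' : ℕ} {i : Fin s} {c : Fin n →₀ ℕ}
    (h : stepData I α (rem I α F G m) = some (i, c))
    (h' : stepData I α (rem I α F G m') = some (i, c)) : m = m' := by
  obtain ⟨_, h0, hexp⟩ := stepData_spec I α h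
  obtain ⟨_, h0', hexp'⟩ := stepData_spec I α h'
  by_contra hne
  rcases lt_or_gt_of_ne hne with hlt | hlt
  · have := (rem_mono I α F hFexp hFI hdiag hG hlt h0').2
    rw [hexp, hexp'] at this
    exact lt_irrefl _ this
  · have := (rem_mono I α F hFexp hFI hdiag hG hlt h0).2
    rw [hexp, hexp'] at this
    exact lt_irrefl _ this

include hFexp hFI hdiag hG in
lemma exists_bound (e : Fin n →₀ ℕ) :
    ∃ M, ∀ m, M ≤ m → rem I α F G m ≠ 0 → D e < D (expOf (rem I α F G m)) := by
  set A : Set ℕ := {m | rem I α F G m ≠ 0 ∧ D (expOf (rem I α F G m)) ≤ D e} with hA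
  have hAfin : A.Finite := by
    refine Set.Finite.of_finite_image (f := fun m => expOf (rem I α F G m)) ?_ ?_
    · refine (finite_D_le e).subset ?_
      rintro x ⟨m, hm, rfl⟩
      exact hm.2
    · intro m hm m' hm' heq
      simp only at heq
      by_contra hne
      rcases lt_or_gt_of_ne hne with hlt | hlt
      · have := (rem_mono I α F hFexp hFI hdiag hG hlt hm'.1).2
        rw [heq] at this
        exact lt_irrefl _ this
      · have := (rem_mono I α F hFexp hFI hdiag hG hlt hm.1).2
        rw [heq] at this
        exact lt_irrefl _ this
  obtain ⟨b, hb⟩ := hAfin.bddAbove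
  refine ⟨b + 1, fun m hm h0 => ?_⟩
  by_contra hle
  rw [not_lt] at hle
  have : m ∈ A := ⟨h0, hle⟩
  have := hb this
  omega

lemma rem_telescope : ∀ M, G - rem I α F G M = ∑ m ∈ Finset.range M, sub I α F (rem I α F G m)
  | 0 => by simp [rem]
  | M + 1 => by
    rw [Finset.sum_range_succ, ← rem_telescope M]
    show G - (rem I α F G M - sub I α F (rem I α F G M)) = _
    ring

/-- The quotient power series. -/
noncomputable def Qs (G : MvPowerSeries (Fin n) K) (i : Fin s) : MvPowerSeries (Fin n) K :=
  fun c =>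
    if h : ∃ m, stepData I α (rem I α F G m) = some (i, c) then
      coeff (expOf (rem I α F G (Classical.choose h))) (rem I α F G (Classical.choose h)) /
        coeff (α i) (F i)
    else 0

include hFexp hFI hdiag hG in
lemma coeff_Qs_of_some {m : ℕ} {i : Fin s} {c : Fin n →₀ ℕ}
    (h : stepData I α (rem I α F G m) = some (i, c)) :
    coeff c (Qs I α F G i) =
      coeff (expOf (rem I α F G m)) (rem I α F G m) / coeff (α i) (F i) := by
  have hex : ∃ m', stepData I α (rem I α F G m') = some (i, c) := ⟨m, h⟩
  rw [coeff_apply, Qs, dif_pos hex]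
  have hspec := Classical.choose_spec hex
  have : Classical.choose hex = m := step_uniq I α F hFexp hFI hdiag hG hspec h
  rw [this]

lemma Qs_ne_imp {i : Fin s} {c : Fin n →₀ ℕ} (h : coeff c (Qs I α F G i) ≠ 0) :
    ∃ m, stepData I α (rem I α F G m) = some (i, c) := by
  by_contra hne
  rw [coeff_apply, Qs, dif_neg hne] at h
  exact h rfl

include hFexp hFI hdiag hG in
lemma key_eq {m : ℕ} {i : Fin s} {c : Fin n →₀ ℕ} {e : Fin n →₀ ℕ}
    (h : stepData I α (rem I α F G m) = some (i, c)) (hce : c ≤ e) :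
    coeff e (sub I α F (rem I α F G m)) =
      coeff c (Qs I α F G i) * coeff (e - c) (F i) := by
  rw [sub_of_some I α F h, coeff_monomial_mul, if_pos hce,
    coeff_Qs_of_some I α F hFexp hFI hdiag hG h]

lemma coeff_sub_ne_zero_le {m : ℕ} {i : Fin s} {c : Fin n →₀ ℕ} {e : Fin n →₀ ℕ}
    (h : stepData I α (rem I α F G m) = some (i, c))
    (hne : coeff e (sub I α F (rem I α F G m)) ≠ 0) : c ≤ e := by
  rw [sub_of_some I α F h, coeff_monomial_mul] at hne
  by_contra hc
  rw [if_neg hc] at hne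
  exact hne rfl

include hFexp in
lemma lt_bound_of_ne {m : ℕ} {i : Fin s} {c : Fin n →₀ ℕ} {e : Fin n →₀ ℕ} {M : ℕ}
    (hM : ∀ m', M ≤ m' → rem I α F G m' ≠ 0 → D e < D (expOf (rem I α F G m')))
    (h : stepData I α (rem I α F G m) = some (i, c)) (hce : c ≤ e)
    (hFne : coeff (e - c) (F i) ≠ 0) : m < M := by
  obtain ⟨_, h0, hexp⟩ := stepData_spec I α h
  have h3 : D (α i) ≤ D (e - c) := isExp_le (hFexp i) hFne
  have h4 : D (expOf (rem I α F G m)) ≤ D e := by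
    calc D (expOf (rem I α F G m)) = D (c + α i) := by rw [hexp, add_comm]
      _ ≤ D (c + (e - c)) := by rw [D_add_le_iff]; exact h3
      _ = D e := by rw [add_tsub_cancel_of_le hce]
  by_contra hge
  rw [not_lt] at hge
  exact absurd h4 (not_le.mpr (hM m hge h0))

set_option maxHeartbeats 2000000 in
include hFexp hFI hdiag hG in
lemma repr_eq : G = ∑ i, Qs I α F G i * F i := by
  rcases Nat.eq_zero_or_pos s with hs0 | hs0
  · haveI hempty : IsEmpty (Fin s) := by subst hs0; infer_instance
    have hG0 : G = 0 := by
      by_contra h0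
      obtain ⟨i, -⟩ := hdiag G hG h0
      exact hempty.elim i
    rw [hG0, Finset.univ_eq_empty, Finset.sum_empty]
  haveI : Inhabited (Fin s) := ⟨⟨0, hs0⟩⟩
  apply MvPowerSeries.ext
  intro e
  obtain ⟨M, hM⟩ := exists_bound I α F hFexp hFI hdiag hG e
  have hremM : coeff e (rem I α F G M) = 0 := by
    by_contra h
    have h0 : rem I α F G M ≠ 0 := fun hz => h (by rw [hz, map_zero])
    have h1 : D (expOf (rem I α F G M)) ≤ D e := isExp_le (isExpOf_expOf h0) h
    exact absurd h1 (not_le.mpr (hM M le_rfl h0))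
  have h1 : coeff e G = ∑ m ∈ Finset.range M, coeff e (sub I α F (rem I α F G m)) := by
    have h2 : coeff e G = coeff e (G - rem I α F G M) + coeff e (rem I α F G M) := by
      rw [map_sub]; ring
    rw [h2, hremM, add_zero, rem_telescope, map_sum]
  have h3 : coeff e (∑ i, Qs I α F G i * F i) =
      ∑ q ∈ Finset.univ ×ˢ Finset.HasAntidiagonal.antidiagonal e,
        coeff q.2.1 (Qs I α F G q.1) * coeff q.2.2 (F q.1) := by
    rw [map_sum, Finset.sum_product]
    exact Finset.sum_congr rfl fun i _ => coeff_mul _ _ _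
  rw [h1, h3]
  rw [← Finset.sum_filter_ne_zero (Finset.range M),
    ← Finset.sum_filter_ne_zero (Finset.univ ×ˢ Finset.HasAntidiagonal.antidiagonal e)]
  have hsome_of : ∀ {m : ℕ}, coeff e (sub I α F (rem I α F G m)) ≠ 0 →
      (stepData I α (rem I α F G m)).isSome := by
    intro m hne
    apply sub_isSome_of_ne_zero I α F
    intro hz
    rw [hz, map_zero] at hne
    exact hne rfl
  refine Finset.sum_nbij'
    (i := fun m => (Option.map
        (fun p : Fin s × (Fin n →₀ ℕ) => (p.1, (p.2, e - p.2)))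
        (stepData I α (rem I α F G m))).getD default)
    (j := fun q => if h : ∃ m', stepData I α (rem I α F G m') = some (q.1, q.2.1) then
        Classical.choose h else 0)
    ?_ ?_ ?_ ?_ ?_
  · -- hi
    intro m hm
    rw [Finset.mem_filter] at hm
    obtain ⟨hmR, hne⟩ := hm
    obtain ⟨⟨i0, c0⟩, hsd⟩ := Option.isSome_iff_exists.mp (hsome_of hne)
    have hce : c0 ≤ e := coeff_sub_ne_zero_le I α F hsd hne
    rw [hsd]
    simp only [Option.map_some, Option.getD_some]
    rw [Finset.mem_filter]
    constructor
    · rw [Finset.mem_product]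
      exact ⟨Finset.mem_univ _, Finset.HasAntidiagonal.mem_antidiagonal.mpr (add_tsub_cancel_of_le hce)⟩
    · simpa [← key_eq I α F hFexp hFI hdiag hG hsd hce] using hne
  · -- hj
    intro q hq
    rw [Finset.mem_filter] at hq
    obtain ⟨hq1, hq2⟩ := hq
    have hex : ∃ m', stepData I α (rem I α F G m') = some (q.1, q.2.1) :=
      Qs_ne_imp I α F (left_ne_zero_of_mul hq2)
    have hspec := Classical.choose_spec hex
    have hadd : q.2.1 + q.2.2 = e :=
      Finset.HasAntidiagonal.mem_antidiagonal.mp (Finset.mem_product.mp hq1).2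
    have hce : q.2.1 ≤ e := hadd ▸ le_self_add
    have hsub : e - q.2.1 = q.2.2 := by rw [← hadd, add_tsub_cancel_left]
    have hterm : coeff e (sub I α F (rem I α F G (Classical.choose hex))) ≠ 0 := by
      rw [key_eq I α F hFexp hFI hdiag hG hspec hce, hsub]
      exact hq2
    have hFne : coeff (e - q.2.1) (F q.1) ≠ 0 := by
      rw [hsub]; exact right_ne_zero_of_mul hq2
    rw [dif_pos hex]
    rw [Finset.mem_filter, Finset.mem_range]
    exact ⟨lt_bound_of_ne I α F hFexp hM hspec hce hFne, hterm⟩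
  · -- left_inv
    intro m hm
    rw [Finset.mem_filter] at hm
    obtain ⟨hmR, hne⟩ := hm
    obtain ⟨⟨i0, c0⟩, hsd⟩ := Option.isSome_iff_exists.mp (hsome_of hne)
    rw [hsd]
    simp only [Option.map_some, Option.getD_some]
    have hex : ∃ m', stepData I α (rem I α F G m') = some (i0, c0) := ⟨m, hsd⟩
    rw [dif_pos hex]
    exact step_uniq I α F hFexp hFI hdiag hG (Classical.choose_spec hex) hsd
  · -- right_inv
    intro q hq
    rw [Finset.mem_filter] at hq
    obtain ⟨hq1, hq2⟩ := hq
    have hex : ∃ m', stepData I α (rem I α F G m') = some (q.1, q.2.1) :=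
      Qs_ne_imp I α F (left_ne_zero_of_mul hq2)
    have hspec := Classical.choose_spec hex
    have hadd : q.2.1 + q.2.2 = e :=
      Finset.HasAntidiagonal.mem_antidiagonal.mp (Finset.mem_product.mp hq1).2
    have hsub : e - q.2.1 = q.2.2 := by rw [← hadd, add_tsub_cancel_left]
    rw [dif_pos hex, hspec]
    simp only [Option.map_some, Option.getD_some]
    rw [hsub]
  · -- terms
    intro m hm
    rw [Finset.mem_filter] at hm
    obtain ⟨hmR, hne⟩ := hm
    obtain ⟨⟨i0, c0⟩, hsd⟩ := Option.isSome_iff_exists.mp (hsome_of hne)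
    have hce : c0 ≤ e := coeff_sub_ne_zero_le I α F hsd hne
    rw [hsd]
    simp only [Option.map_some, Option.getD_some]
    exact key_eq I α F hFexp hFI hdiag hG hsd hce

end Main

end S12

open S12 in
/-- Let `I` be an ideal in `k[[y]]` with diagram `N(I)` having
vertices `α¹,…,α^s` (the minimal finite set with `N(I) = {α¹,…,α^s} + ℕ^n`), and let
`F₁,…,F_s ∈ I` with `exp F_i = α^i`.  With `Δ_i = (α^i + ℕ^n) \ ⋃_{j<i} Δ_j`
(equivalently `(α^i + ℕ^n) \ ⋃_{j<i} (α^j + ℕ^n)`), one has `N(I) = ⋃_{i=1}^s Δ_i`,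
and `F₁,…,F_s` generate `I`. -/
theorem statement12 {K : Type*} [Field K] {n s : ℕ}
    (I : Ideal (MvPowerSeries (Fin n) K))
    (α : Fin s → (Fin n →₀ ℕ))
    (hαmem : ∀ i, α i ∈ diagramOf I)
    (hαgen : diagramOf I = ⋃ i : Fin s, cone (α i))
    (hαmin : ∀ B : Finset (Fin n →₀ ℕ), ↑B ⊆ diagramOf I →
      diagramOf I = {x | ∃ b ∈ B, ∃ c : Fin n →₀ ℕ, x = b + c} → ∀ i, α i ∈ B)
    (F : Fin s → MvPowerSeries (Fin n) K)
    (hFI : ∀ i, F i ∈ I) (hFexp : ∀ i, IsExpOf (F i) (α i))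
    (Δi : Fin s → Set (Fin n →₀ ℕ))
    (hΔi : ∀ i, Δi i = cone (α i) \ ⋃ j : Fin s, ⋃ _ : j < i, cone (α j)) :
    diagramOf I = (⋃ i : Fin s, Δi i) ∧ I = Ideal.span (Set.range F) := by
  classical
  constructor
  · rw [hαgen]
    ext x
    simp only [Set.mem_iUnion]
    constructor
    · rintro ⟨i, hi⟩
      have hne : (Finset.univ.filter (fun j : Fin s => x ∈ cone (α j))).Nonempty :=
        ⟨i, by simp [hi]⟩
      obtain ⟨i₀, hi₀, hmin⟩ :=
        (Finset.univ.filter (fun j : Fin s => x ∈ cone (α j))).exists_min_image id hne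
      rw [Finset.mem_filter] at hi₀
      refine ⟨i₀, ?_⟩
      rw [hΔi]
      refine ⟨hi₀.2, ?_⟩
      intro hx
      simp only [Set.mem_iUnion] at hx
      obtain ⟨j, hj, hxj⟩ := hx
      have : i₀ ≤ j := hmin j (Finset.mem_filter.mpr ⟨Finset.mem_univ _, hxj⟩)
      exact absurd hj (not_lt.mpr this)
    · rintro ⟨i, hx⟩
      rw [hΔi] at hx
      exact ⟨i, hx.1⟩
  · refine le_antisymm ?_ (Ideal.span_le.mpr ?_)
    · intro G hG
      have hdiag : ∀ r ∈ I, r ≠ 0 → ∃ i c, expOf r = α i + c := by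
        intro r hr h0
        have hmem : expOf r ∈ diagramOf I := ⟨r, hr, h0, isExpOf_expOf h0⟩
        rw [hαgen] at hmem
        simp only [Set.mem_iUnion] at hmem
        obtain ⟨i, c, hc⟩ := hmem
        exact ⟨i, c, hc⟩
      have hrepr := repr_eq I α F hFexp hFI hdiag hG
      rw [hrepr]
      exact Ideal.sum_mem _ fun i _ =>
        Ideal.mul_mem_left _ _ (Ideal.subset_span ⟨i, rfl⟩)
    · rintro _ ⟨i, rfl⟩
      exact hFI i
end
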